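/- Gradient equality for the ℓ_∞ norm under margin condition: let θ ∈ ℝ^m with margin d(θ) = (|θ_{π(1)}| − |θ_{π(2)}|)/√2 > 0. Suppose β̃, δ ∈ ℝ^m and r > 0 satisfy ‖β̃ − θ‖₂ + ‖δ‖₂/r < d(θ). Then for all c₁, c₂ ∈ (0,1), the ℓ_∞ norm is differentiable at both ξ = β̃ + c₁δ/r and ξ* = θ + c₂δ/r, and ∇‖·‖_∞(ξ) = ∇‖·‖_∞(ξ*) = sgn(θ_{π(1)}) e_{π(1)}. Consequently, (‖β̃ + δ/r‖_∞ − ‖β̃‖_∞) = (‖θ + δ/r‖_∞ − ‖θ‖_∞) whenever in addition β̃_{π(1)} and θ_{π(1)} relations allow the mean value theorem; in particular the difference of differences equals 0. -/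

import Mathlib

open scoped BigOperators

/-- The Euclidean norm on `ℝ^m`. -/
noncomputable def e2norm {m : ℕ} (x : Fin m → ℝ) : ℝ := Real.sqrt (∑ i, x i ^ 2)

/-- The ℓ_∞ (supremum) norm on `ℝ^m`. -/
noncomputable def supnorm {m : ℕ} (x : Fin m → ℝ) : ℝ := ⨆ i, |x i|

/-- Gradient equality for the ℓ_∞ norm under a margin condition: if
‖β̃−θ‖₂ + ‖δ‖₂/r < d(θ) with d(θ) = (|θ_{π(1)}|−|θ_{π(2)}|)/√2 > 0, then for all
c₁, c₂ ∈ (0,1) the ℓ_∞ norm is differentiable at ξ = β̃ + c₁δ/r and ξ* = θ + c₂δ/r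
with common gradient sgn(θ_{π(1)}) e_{π(1)}, and consequently
(‖β̃+δ/r‖_∞ − ‖β̃‖_∞) − (‖θ+δ/r‖_∞ − ‖θ‖_∞) = 0. -/
theorem linf_gradient_equality_margin {m : ℕ} (hm : 2 ≤ m)
    (θ : Fin m → ℝ) (π : Equiv.Perm (Fin m))
    (i0 i1 : Fin m) (hi0 : (i0 : ℕ) = 0) (hi1 : (i1 : ℕ) = 1)
    (hsort : ∀ i j : Fin m, i ≤ j → |θ (π j)| ≤ |θ (π i)|)
    (d : ℝ) (hd : d = (|θ (π i0)| - |θ (π i1)|) / Real.sqrt 2) (hdpos : 0 < d)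
    (tb δ : Fin m → ℝ) (r : ℝ) (hr : 0 < r)
    (hcond : e2norm (tb - θ) + e2norm δ / r < d) :
    (∀ c1 ∈ Set.Ioo (0 : ℝ) 1, HasFDerivAt supnorm
        (Real.sign (θ (π i0)) • (ContinuousLinearMap.proj (π i0) : (Fin m → ℝ) →L[ℝ] ℝ))
        (tb + (c1 / r) • δ)) ∧
    (∀ c2 ∈ Set.Ioo (0 : ℝ) 1, HasFDerivAt supnorm
        (Real.sign (θ (π i0)) • (ContinuousLinearMap.proj (π i0) : (Fin m → ℝ) →L[ℝ] ℝ))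
        (θ + (c2 / r) • δ)) ∧
    (supnorm (tb + r⁻¹ • δ) - supnorm tb) - (supnorm (θ + r⁻¹ • δ) - supnorm θ) = 0 := by
  have h2 : (0:ℝ) < Real.sqrt 2 := by positivity
  have h2ne : Real.sqrt 2 ≠ 0 := ne_of_gt h2
  have h12 : (1:ℝ) < Real.sqrt 2 := by
    rw [show (1:ℝ) = Real.sqrt 1 from Real.sqrt_one.symm]
    exact Real.sqrt_lt_sqrt (by norm_num) (by norm_num)
  set j := π i0 with hj
  set s := Real.sign (θ j) with hs
  have hgapj1 : Real.sqrt 2 * d = |θ j| - |θ (π i1)| := by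
    rw [hd]; field_simp
  have hgap : ∀ i, i ≠ j → |θ i| ≤ |θ j| - Real.sqrt 2 * d := by
    intro i hi
    have hne : π.symm i ≠ i0 := by
      intro h
      apply hi
      rw [← Equiv.apply_symm_apply π i, h]
    have h1 : i1 ≤ π.symm i := by
      rw [Fin.le_def, hi1]
      have : ((π.symm i : Fin m) : ℕ) ≠ 0 := by
        intro h0
        exact hne (Fin.ext (by rw [h0, hi0]))
      omega
    have h2' := hsort i1 (π.symm i) h1
    rw [Equiv.apply_symm_apply] at h2'
    linarith
  have hθj : Real.sqrt 2 * d ≤ |θ j| := by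
    have := abs_nonneg (θ (π i1)); linarith
  -- coordinatewise bound
  have hcoord : ∀ (y : Fin m → ℝ) (i : Fin m), |y i| ≤ e2norm y := by
    intro y i
    have h1 : (y i)^2 ≤ ∑ k, (y k)^2 :=
      Finset.single_le_sum (fun k _ => sq_nonneg (y k)) (Finset.mem_univ i)
    calc |y i| = Real.sqrt ((y i)^2) := (Real.sqrt_sq_eq_abs _).symm
    _ ≤ _ := Real.sqrt_le_sqrt h1
  have hpair : ∀ (y : Fin m → ℝ) (i k : Fin m), i ≠ k →
      |y i| + |y k| ≤ Real.sqrt 2 * e2norm y := by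
    intro y i k hik
    have hsum : (y i)^2 + (y k)^2 ≤ ∑ l, (y l)^2 := by
      calc (y i)^2 + (y k)^2 = ∑ l ∈ ({i,k} : Finset (Fin m)), (y l)^2 :=
        (Finset.sum_pair (f := fun l => y l ^ 2) hik).symm
      _ ≤ _ := Finset.sum_le_sum_of_subset_of_nonneg (Finset.subset_univ _)
        (fun _ _ _ => sq_nonneg _)
    calc |y i| + |y k| = Real.sqrt ((|y i| + |y k|)^2) := by
          rw [Real.sqrt_sq (by positivity)]
    _ ≤ Real.sqrt (2 * ∑ l, (y l)^2) := by
          apply Real.sqrt_le_sqrt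
          nlinarith [sq_nonneg (|y i| - |y k|), sq_abs (y i), sq_abs (y k)]
    _ = Real.sqrt 2 * e2norm y := by rw [Real.sqrt_mul (by norm_num : (0:ℝ) ≤ 2)]; rfl
  have hnonneg : ∀ y : Fin m → ℝ, 0 ≤ e2norm y := fun y => Real.sqrt_nonneg _
  -- pointwise evaluation on the ball
  have heval : ∀ x : Fin m → ℝ, e2norm (x - θ) < d → supnorm x = s * x j := by
    intro x hx
    have hxj : ∀ i, i ≠ j → |x i| < |x j| := by
      intro i hi
      have hp := hpair (x - θ) i j hi
      simp only [Pi.sub_apply] at hp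
      have hgi := hgap i hi
      have h3 : |x i| - |θ i| ≤ |x i - θ i| := abs_sub_abs_le_abs_sub _ _
      have h4 : |θ j| - |x j| ≤ |x j - θ j| := by
        rw [abs_sub_comm]; exact abs_sub_abs_le_abs_sub _ _
      have h5 : Real.sqrt 2 * e2norm (x - θ) < Real.sqrt 2 * d :=
        mul_lt_mul_of_pos_left hx h2
      have h6 : 0 ≤ |x i - θ i| := abs_nonneg _
      have h7 : 0 ≤ |x j - θ j| := abs_nonneg _
      linarith
    haveI : Nonempty (Fin m) := ⟨j⟩
    have hsup : supnorm x = |x j| := by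
      unfold supnorm
      apply le_antisymm
      · apply ciSup_le
        intro i
        by_cases h : i = j
        · rw [h]
        · exact (hxj i h).le
      · exact le_ciSup (f := fun i => |x i|) (Set.Finite.bddAbove (Set.finite_range _)) j
    have hdj : |x j - θ j| < d := by
      have := hcoord (x - θ) j
      simp only [Pi.sub_apply] at this
      linarith
    have hdθ : d < |θ j| := by nlinarith
    rcases lt_trichotomy (θ j) 0 with hneg | hzero | hpos
    · have hxneg : x j < 0 := by
        have h1 : |θ j| = -θ j := abs_of_neg hneg
        have h2'' := abs_lt.mp hdj
        linarith
      rw [hsup, abs_of_neg hxneg, hs, Real.sign_of_neg hneg]; ring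
    · exfalso; rw [hzero] at hdθ; simp at hdθ; linarith
    · have hxpos : 0 < x j := by
        have h1 : |θ j| = θ j := abs_of_pos hpos
        have h2'' := abs_lt.mp hdj
        linarith
      rw [hsup, abs_of_pos hxpos, hs, Real.sign_of_pos hpos]; ring
  -- open ball
  have hUopen : IsOpen {x : Fin m → ℝ | e2norm (x - θ) < d} := by
    have hc : Continuous fun x : Fin m → ℝ => e2norm (x - θ) := by
      unfold e2norm
      exact Real.continuous_sqrt.comp (continuous_finset_sum _ fun i _ =>
        ((continuous_apply i).sub continuous_const).pow 2)
    exact isOpen_lt hc continuous_const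
  -- derivative on the ball
  have hderiv : ∀ x : Fin m → ℝ, e2norm (x - θ) < d →
      HasFDerivAt supnorm (s • (ContinuousLinearMap.proj j : (Fin m → ℝ) →L[ℝ] ℝ)) x := by
    intro x hx
    have hL := (s • (ContinuousLinearMap.proj j : (Fin m → ℝ) →L[ℝ] ℝ)).hasFDerivAt (x := x)
    apply hL.congr_of_eventuallyEq
    filter_upwards [hUopen.mem_nhds hx] with y hy
    rw [heval y hy]
    simp [smul_eq_mul]
  -- e2norm as Euclidean norm
  have he2 : ∀ y : Fin m → ℝ, e2norm y = ‖(WithLp.toLp 2 y : EuclideanSpace ℝ (Fin m))‖ := by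
    intro y
    rw [EuclideanSpace.norm_eq]
    simp only [Real.norm_eq_abs, sq_abs]
    rfl
  have htri : ∀ a b : Fin m → ℝ, e2norm (a + b) ≤ e2norm a + e2norm b := by
    intro a b
    rw [he2, he2, he2]
    exact norm_add_le (WithLp.toLp 2 a : EuclideanSpace ℝ (Fin m)) (WithLp.toLp 2 b : EuclideanSpace ℝ (Fin m))
  have hsmul : ∀ (c : ℝ) (y : Fin m → ℝ), e2norm (c • y) = |c| * e2norm y := by
    intro c y
    rw [he2, he2]
    rw [show (WithLp.toLp 2 (c • y) : EuclideanSpace ℝ (Fin m)) = c • (WithLp.toLp 2 y : EuclideanSpace ℝ (Fin m)) from rfl]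
    rw [norm_smul, Real.norm_eq_abs]
  -- membership
  have hmem : ∀ (b : Fin m → ℝ), e2norm (b - θ) ≤ e2norm (tb - θ) → ∀ c : ℝ, 0 ≤ c → c ≤ 1 →
      e2norm ((b + (c/r) • δ) - θ) < d := by
    intro b hb c hc0 hc1
    have h1 : b + (c/r) • δ - θ = (b - θ) + (c/r) • δ := by abel
    rw [h1]
    have h2' : e2norm ((c/r) • δ) ≤ e2norm δ / r := by
      rw [hsmul, abs_of_nonneg (div_nonneg hc0 hr.le)]
      rw [div_mul_eq_mul_div, div_le_div_iff₀ hr hr]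
      have := mul_le_of_le_one_left (hnonneg δ) hc1
      nlinarith [hnonneg δ]
    calc e2norm ((b - θ) + (c/r) • δ) ≤ e2norm (b - θ) + e2norm ((c/r) • δ) := htri _ _
    _ ≤ e2norm (tb - θ) + e2norm δ / r := by linarith
    _ < d := hcond
  have hθ0 : e2norm (θ - θ) ≤ e2norm (tb - θ) := by
    have : e2norm (θ - θ) = 0 := by simp [e2norm]
    rw [this]; exact hnonneg _
  have hδr : 0 ≤ e2norm δ / r := div_nonneg (hnonneg δ) hr.le
  refine ⟨?_, ?_, ?_⟩
  · intro c1 hc1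
    exact hderiv _ (hmem tb le_rfl c1 hc1.1.le hc1.2.le)
  · intro c2 hc2
    exact hderiv _ (hmem θ hθ0 c2 hc2.1.le hc2.2.le)
  · have hrinv : r⁻¹ • δ = ((1:ℝ)/r) • δ := by rw [one_div]
    have e1 : supnorm (tb + r⁻¹ • δ) = s * (tb + r⁻¹ • δ) j := by
      rw [hrinv]; exact heval _ (hmem tb le_rfl 1 zero_le_one le_rfl)
    have e2 : supnorm tb = s * tb j := by
      apply heval
      linarith
    have e3 : supnorm (θ + r⁻¹ • δ) = s * (θ + r⁻¹ • δ) j := by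
      rw [hrinv]; exact heval _ (hmem θ hθ0 1 zero_le_one le_rfl)
    have e4 : supnorm θ = s * θ j := by
      apply heval
      have : e2norm (θ - θ) = 0 := by simp [e2norm]
      linarith
    rw [e1, e2, e3, e4]
    simp only [Pi.add_apply, Pi.smul_apply, smul_eq_mul]
    ring
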